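/- If in a domination digraph on n agents there is a set S of n−1 agents each of whom dominates at least n−2 agents, then either all agents of S dominate the excluded agent, or there exists an ordering A_2, …, A_n of some n−1 of the agents such that A_i dominates A_j whenever i < j, or more generally the agents can be split into two nonempty groups G1, G2 with every member of G2 dominating every member of G1. (Hence the graph is 'solvable'.) -/
import Mathlib

/-- Auxiliary lemma: if every element of a finite set `T` dominates all vertices other
than itself and at most one "missed" vertex, then either there is a nonempty subset `C`
of `T` every member of which dominates everything outside `C`, or the elements of `T`
can be listed so that each one dominates all later ones. -/
lemma solvable_domination_aux {n : ℕ} (D : Fin n → Fin n → Prop) :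
    ∀ T : Finset (Fin n), (∀ i ∈ T, ∃ w, ∀ j, j ≠ i → j ≠ w → D i j) →
    (∃ C : Finset (Fin n), C ⊆ T ∧ C.Nonempty ∧ ∀ i ∈ C, ∀ j ∉ C, D i j) ∨
    (∃ l : List (Fin n), l.Nodup ∧ l.toFinset = T ∧ l.Pairwise D) := by
  classical
  intro T
  induction T using Finset.strongInduction with
  | _ T ih =>
    intro h
    rcases T.eq_empty_or_nonempty with rfl | hT
    · exact Or.inr ⟨[], by simp⟩
    by_cases hs : ∃ s ∈ T, ∀ j ∈ T, j ≠ s → D s j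
    · obtain ⟨s, hsT, hsdom⟩ := hs
      have hrec := ih (T.erase s) (Finset.erase_ssubset hsT)
        (fun i hi => h i (Finset.mem_of_mem_erase hi))
      rcases hrec with ⟨C, hCsub, hCne, hC⟩ | ⟨l, hnd, hset, hpw⟩
      · exact Or.inl ⟨C, hCsub.trans (Finset.erase_subset _ _), hCne, hC⟩
      · refine Or.inr ⟨s :: l, ?_, ?_, ?_⟩
        · rw [List.nodup_cons]
          refine ⟨fun hmem => ?_, hnd⟩
          have : s ∈ T.erase s := hset ▸ List.mem_toFinset.2 hmem
          exact (Finset.notMem_erase s T) this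
        · rw [List.toFinset_cons, hset, Finset.insert_erase hsT]
        · refine List.Pairwise.cons (fun j hj => ?_) hpw
          have hjT : j ∈ T.erase s := hset ▸ List.mem_toFinset.2 hj
          exact hsdom j (Finset.mem_of_mem_erase hjT) (Finset.ne_of_mem_erase hjT)
    · push_neg at hs
      refine Or.inl ⟨T, le_refl _, hT, fun i hi j hj => ?_⟩
      obtain ⟨w, hw⟩ := h i hi
      obtain ⟨j₀, hj₀T, hj₀ne, hj₀d⟩ := hs i hi
      have hwj₀ : j₀ = w := by
        by_contra hne; exact hj₀d (hw j₀ hj₀ne hne)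
      refine hw j (fun hji => hj (hji ▸ hi)) (fun hjw => hj ?_)
      rw [hjw, ← hwj₀]; exact hj₀T

/-- Solvability of domination graphs (combinatorial core of Lemma `solvable-n-2`):
if in a domination digraph on `n` agents there is an agent `a` such that each of the
other `n-1` agents dominates at least `n-2` agents (other than itself), then either the
agents split into nonempty groups `G1`, `G2` with every member of `G2` dominating every
member of `G1`, or there is a chain of `n-1` distinct agents each dominating all later
ones. -/
theorem solvable_domination_graph (n : ℕ)
    (D : Fin n → Fin n → Prop) [DecidableRel D]
    (a : Fin n)
    (hdeg : ∀ i : Fin n, i ≠ a →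
      n - 2 ≤ (Finset.univ.filter fun j => j ≠ i ∧ D i j).card) :
    (∃ G1 G2 : Finset (Fin n), G1.Nonempty ∧ G2.Nonempty ∧
      Disjoint G1 G2 ∧ G1 ∪ G2 = Finset.univ ∧
      ∀ i ∈ G2, ∀ j ∈ G1, D i j) ∨
    (∃ A : Fin (n - 1) → Fin n, Function.Injective A ∧
      ∀ i j : Fin (n - 1), i < j → D (A i) (A j)) := by
  classical
  -- trivial case: n ≤ 2, a constant "chain" works since Fin (n-1) has ≤ 1 element
  rcases le_or_gt n 2 with hn | hn
  · refine Or.inr ⟨fun _ => a, fun i j _ => Fin.ext ?_, fun i j hij => ?_⟩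
    · have hi := i.isLt; have hj := j.isLt; omega
    · exfalso; have hi := i.isLt; have hj := j.isLt
      have := (Fin.lt_def).1 hij; omega
  -- each i ≠ a misses at most one vertex
  have hmiss : ∀ i ∈ Finset.univ.erase a, ∃ w, ∀ j, j ≠ i → j ≠ w → D i j := by
    intro i hi
    have hia : i ≠ a := Finset.ne_of_mem_erase hi
    set F := Finset.univ.filter fun j => j ≠ i ∧ D i j with hF
    set B := Finset.univ.filter fun j => j ≠ i ∧ ¬ D i j with hB
    have hdisj : Disjoint F B := by
      rw [Finset.disjoint_left]
      intro x hx hx'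
      rw [hF, Finset.mem_filter] at hx
      rw [hB, Finset.mem_filter] at hx'
      exact hx'.2.2 hx.2.2
    have hsub : F ∪ B ⊆ Finset.univ.erase i := by
      intro x hx
      rcases Finset.mem_union.1 hx with hx | hx
      · rw [hF, Finset.mem_filter] at hx
        exact Finset.mem_erase.2 ⟨hx.2.1, Finset.mem_univ x⟩
      · rw [hB, Finset.mem_filter] at hx
        exact Finset.mem_erase.2 ⟨hx.2.1, Finset.mem_univ x⟩
    have hcard : F.card + B.card ≤ n - 1 := by
      have h1 := Finset.card_le_card hsub
      rw [Finset.card_union_of_disjoint hdisj] at h1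
      have h2 : (Finset.univ.erase i).card = n - 1 := by
        rw [Finset.card_erase_of_mem (Finset.mem_univ i), Finset.card_univ, Fintype.card_fin]
      omega
    have hFcard : n - 2 ≤ F.card := hdeg i hia
    have hBcard : B.card ≤ 1 := by omega
    rcases B.eq_empty_or_nonempty with hBe | ⟨w, hw⟩
    · refine ⟨i, fun j hji _ => ?_⟩
      by_contra hd
      have : j ∈ B := by rw [hB, Finset.mem_filter]; exact ⟨Finset.mem_univ j, hji, hd⟩
      rw [hBe] at this; exact absurd this (Finset.notMem_empty j)
    · refine ⟨w, fun j hji hjw => ?_⟩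
      by_contra hd
      have hjB : j ∈ B := by rw [hB, Finset.mem_filter]; exact ⟨Finset.mem_univ j, hji, hd⟩
      exact hjw (Finset.card_le_one.1 hBcard j hjB w hw)
  rcases solvable_domination_aux D (Finset.univ.erase a) hmiss with
    ⟨C, hCsub, hCne, hC⟩ | ⟨l, hnd, hset, hpw⟩
  · -- a cycle-like set C dominating everything outside: partition (Cᶜ, C)
    refine Or.inl ⟨Cᶜ, C, ⟨a, ?_⟩, hCne, ?_, ?_, fun i hi j hj => hC i hi j (Finset.mem_compl.1 hj)⟩
    · rw [Finset.mem_compl]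
      intro haC
      exact (Finset.ne_of_mem_erase (hCsub haC)) rfl
    · exact disjoint_compl_left
    · rw [Finset.union_comm, Finset.union_compl]
  · -- a chain listing all agents other than a
    have hlen : l.length = n - 1 := by
      have h1 : l.toFinset.card = l.length := List.toFinset_card_of_nodup hnd
      rw [hset] at h1
      rw [Finset.card_erase_of_mem (Finset.mem_univ a), Finset.card_univ, Fintype.card_fin] at h1
      omega
    refine Or.inr ⟨fun i => l.get (Fin.cast hlen.symm i), ?_, ?_⟩
    · intro i j hij
      have hinj := List.nodup_iff_injective_get.1 hnd hij
      exact Fin.cast_injective _ hinj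
    · intro i j hij
      exact List.pairwise_iff_get.1 hpw _ _ (by simpa using hij)
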